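/- Let H be a complex Hilbert space and let (U_t)_{t ∈ ℝ} be a strongly continuous one-parameter group of unitary operators on H satisfying U_0 = id, U_{s+t} = U_s ∘ U_t, and U_{t+1} = U_t for all s, t ∈ ℝ. For m ∈ ℤ and s ∈ H set s_m := ∫_0^1 exp(−2π i t m) · U_t s dt (Bochner integral). Then: (i) s_m belongs to the weight space H_m := { v ∈ H : U_t v = exp(2π i t m) · v for all t }; (ii) the vectors (s_m)_{m ∈ ℤ} are pairwise orthogonal; (iii) ∑_{m ∈ ℤ} ‖s_m‖² = ‖s‖²; and (iv) the series ∑_{m ∈ ℤ} s_m converges in H to s. In particular, H is the orthogonal Hilbert direct sum of the weight spaces (H_m)_{m ∈ ℤ}. -/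

import Mathlib

open MeasureTheory intervalIntegral

/-- Weight decomposition for a continuous unitary representation of the circle
`ℝ/ℤ` on a complex Hilbert space: the Fourier components `s m` of a vector `s`
belong to the weight spaces, are pairwise orthogonal, satisfy Parseval's
identity, and sum to `s`. -/
theorem circle_rep_weight_decomposition {H : Type*} [NormedAddCommGroup H]
    [InnerProductSpace ℂ H] [CompleteSpace H]
    (U : ℝ → H ≃ₗᵢ[ℂ] H)
    (hcont : ∀ s : H, Continuous fun t => U t s)
    (h0 : ∀ s : H, U 0 s = s)
    (hadd : ∀ t u : ℝ, ∀ s : H, U (t + u) s = U t (U u s))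
    (hper : ∀ t : ℝ, ∀ s : H, U (t + 1) s = U t s)
    (s : H) (sm : ℤ → H)
    (hsm : ∀ m : ℤ, sm m = ∫ t in (0 : ℝ)..1,
      Complex.exp (-2 * Real.pi * Complex.I * t * m) • U t s) :
    (∀ m : ℤ, ∀ t : ℝ,
        U t (sm m) = Complex.exp (2 * Real.pi * Complex.I * t * m) • sm m) ∧
      (∀ m m' : ℤ, m ≠ m' → inner ℂ (sm m) (sm m') = (0 : ℂ)) ∧
      HasSum (fun m : ℤ => ‖sm m‖ ^ 2) (‖s‖ ^ 2) ∧
      HasSum sm s := by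
  classical
  -- continuity of the integrand
  have hgc : ∀ m : ℤ, Continuous fun t : ℝ =>
      Complex.exp (-2 * Real.pi * Complex.I * t * m) • U t s := by
    intro m
    exact (Complex.continuous_exp.comp (by fun_prop)).smul (hcont s)
  have hgi : ∀ m : ℤ, IntervalIntegrable
      (fun t : ℝ => Complex.exp (-2 * Real.pi * Complex.I * t * m) • U t s)
      volume 0 1 := fun m => (hgc m).intervalIntegrable 0 1
  -- (i) weight property
  have hw : ∀ m : ℤ, ∀ t : ℝ,
      U t (sm m) = Complex.exp (2 * Real.pi * Complex.I * t * m) • sm m := by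
    intro m t
    set h : ℝ → H := fun u =>
      Complex.exp (-2 * Real.pi * Complex.I * ((u : ℂ) - (t : ℂ)) * m) • U u s with hh
    have hp : Function.Periodic h 1 := by
      intro u
      simp only [hh]
      rw [hper]
      congr 1
      push_cast
      rw [show (-2 * (Real.pi : ℂ) * Complex.I * ((u : ℂ) + 1 - (t : ℂ)) * m)
          = -2 * (Real.pi : ℂ) * Complex.I * ((u : ℂ) - (t : ℂ)) * m
            + ((-m : ℤ) * (2 * (Real.pi : ℂ) * Complex.I)) by push_cast; ring,
        Complex.exp_add, Complex.exp_int_mul_two_pi_mul_I, mul_one]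
    have hL : ∀ v : H, ((U t).toLinearIsometry.toContinuousLinearMap) v = U t v :=
      fun v => rfl
    calc U t (sm m)
        = ((U t).toLinearIsometry.toContinuousLinearMap) (∫ u in (0:ℝ)..1,
            Complex.exp (-2 * Real.pi * Complex.I * u * m) • U u s) := by
          rw [hsm m, hL]
      _ = ∫ u in (0:ℝ)..1, ((U t).toLinearIsometry.toContinuousLinearMap)
            (Complex.exp (-2 * Real.pi * Complex.I * u * m) • U u s) :=
          (ContinuousLinearMap.intervalIntegral_comp_comm _ (hgi m)).symm
      _ = ∫ u in (0:ℝ)..1, h (u + t) := by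
          refine intervalIntegral.integral_congr fun u _ => ?_
          rw [ContinuousLinearMap.map_smul, hL, ← hadd, show t + u = u + t from add_comm t u]
          simp only [hh]
          congr 2
          push_cast; ring
      _ = ∫ u in t..(t+1), h u := by
          rw [intervalIntegral.integral_comp_add_right h t, zero_add, add_comm 1 t]
      _ = ∫ u in (0:ℝ)..1, h u := by
          simpa using hp.intervalIntegral_add_eq t 0
      _ = Complex.exp (2 * Real.pi * Complex.I * t * m) • sm m := by
          rw [hsm m, ← intervalIntegral.integral_smul]
          refine intervalIntegral.integral_congr fun u _ => ?_
          simp only [hh, smul_smul]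
          congr 1
          rw [← Complex.exp_add]
          congr 1
          ring
  -- orthogonality
  have horth : ∀ m m' : ℤ, m ≠ m' → (inner ℂ (sm m) (sm m') : ℂ) = 0 := by
    intro m m' hne
    set t : ℝ := 1 / (2 * ((m' : ℝ) - m)) with ht
    have hmm : ((m' : ℝ) - m) ≠ 0 := by
      intro h
      apply hne
      have : (m : ℝ) = m' := by linarith
      exact_mod_cast this
    have hmmc : ((m' : ℂ) - m) ≠ 0 := by
      have := Complex.ofReal_ne_zero.mpr hmm
      push_cast at this
      exact this
    have h1 : (inner ℂ (U t (sm m)) (U t (sm m')) : ℂ) = inner ℂ (sm m) (sm m') :=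
      LinearIsometryEquiv.inner_map_map (U t) _ _
    rw [hw m t, hw m' t, inner_smul_left, inner_smul_right, ← Complex.exp_conj] at h1
    rw [show (starRingEnd ℂ) (2 * (Real.pi:ℂ) * Complex.I * t * m)
        = -(2 * (Real.pi:ℂ) * Complex.I * t * m) by
      simp only [map_mul, Complex.conj_I, Complex.conj_ofReal, map_ofNat, map_intCast]
      ring] at h1
    rw [← mul_assoc, ← Complex.exp_add] at h1
    rw [show -(2 * (Real.pi:ℂ) * Complex.I * t * m) + 2 * (Real.pi:ℂ) * Complex.I * t * m'
        = (Real.pi:ℂ) * Complex.I by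
      rw [ht]; push_cast; field_simp; ring] at h1
    rw [Complex.exp_pi_mul_I] at h1
    linear_combination (-1/2 : ℂ) * h1
  have hself : ∀ v : H, (inner ℂ v v : ℂ) = ((‖v‖ ^ 2 : ℝ) : ℂ) := fun v => by
    rw [inner_self_eq_norm_sq_to_K]; norm_cast
  -- ⟪sm m, s⟫ = ‖sm m‖²
  have hinner_s : ∀ m : ℤ, (inner ℂ (sm m) s : ℂ) = ((‖sm m‖ ^ 2 : ℝ) : ℂ) := by
    intro m
    have hIL : ∀ v : H, (innerSL ℂ (sm m)) v = inner ℂ (sm m) v := fun v => rfl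
    have key : (inner ℂ (sm m) (sm m) : ℂ) = inner ℂ (sm m) s := by
      nth_rewrite 2 [hsm m]
      rw [← hIL, ← ContinuousLinearMap.intervalIntegral_comp_comm _ (hgi m)]
      have : ∀ u : ℝ, (innerSL ℂ (sm m))
          (Complex.exp (-2 * Real.pi * Complex.I * u * m) • U u s)
          = (inner ℂ (sm m) s : ℂ) := by
        intro u
        rw [hIL, inner_smul_right]
        have hsplit : sm m = U u (U (-u) (sm m)) := by
          rw [← hadd]
          simp [h0]
        nth_rewrite 1 [hsplit]
        rw [LinearIsometryEquiv.inner_map_map, hw m (-u), inner_smul_left,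
          ← Complex.exp_conj]
        rw [show (starRingEnd ℂ) (2 * (Real.pi:ℂ) * Complex.I * (-u : ℝ) * m)
            = 2 * (Real.pi:ℂ) * Complex.I * u * m by
          simp only [map_mul, Complex.conj_I, Complex.conj_ofReal, map_ofNat, map_intCast]
          push_cast; ring]
        rw [← mul_assoc, ← Complex.exp_add]
        rw [show -2 * (Real.pi:ℂ) * Complex.I * u * m
            + 2 * (Real.pi:ℂ) * Complex.I * u * m = 0 by ring, Complex.exp_zero, one_mul]
      rw [intervalIntegral.integral_congr fun u _ => this u]
      simp
    rw [← key, hself]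
  -- finite Bessel identity
  have hBF : ∀ F : Finset ℤ, ‖s - ∑ m ∈ F, sm m‖ ^ 2
      = ‖s‖ ^ 2 - ∑ m ∈ F, ‖sm m‖ ^ 2 := by
    intro F
    have hvv : (inner ℂ (∑ m ∈ F, sm m) (∑ m ∈ F, sm m) : ℂ)
        = ((∑ m ∈ F, ‖sm m‖ ^ 2 : ℝ) : ℂ) := by
      rw [sum_inner]
      push_cast
      refine Finset.sum_congr rfl fun m hm => ?_
      rw [inner_sum, Finset.sum_eq_single m
        (fun b _ hb => horth m b fun e => hb e.symm) (fun hnm => absurd hm hnm),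
        hself]
      norm_cast
    have hvs : (inner ℂ s (∑ m ∈ F, sm m) : ℂ)
        = ((∑ m ∈ F, ‖sm m‖ ^ 2 : ℝ) : ℂ) := by
      rw [inner_sum]
      push_cast
      refine Finset.sum_congr rfl fun m hm => ?_
      rw [← inner_conj_symm, hinner_s m]
      push_cast
      simp [Complex.conj_ofReal]
    have hns : ‖∑ m ∈ F, sm m‖ ^ 2 = ∑ m ∈ F, ‖sm m‖ ^ 2 := by
      have h' := hvv
      rw [hself] at h'
      exact_mod_cast h'
    have h := _root_.norm_sub_sq (𝕜 := ℂ) s (∑ m ∈ F, sm m)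
    rw [hvs] at h
    simp only [RCLike.re_to_complex, Complex.ofReal_re] at h
    rw [hns] at h
    linarith
  -- Bessel inequality gives summability
  have hbessel : Summable fun m : ℤ => ‖sm m‖ ^ 2 := by
    apply summable_of_sum_le (c := ‖s‖ ^ 2) (fun m => sq_nonneg _)
    intro F
    nlinarith [hBF F, sq_nonneg ‖s - ∑ m ∈ F, sm m‖]
  -- Fourier theory for the matrix coefficient
  haveI : Fact (0 < (1:ℝ)) := ⟨one_pos⟩
  set φ : ℝ → ℂ := fun t => (inner ℂ s (U t s) : ℂ) with hφ
  have hφc : Continuous φ := continuous_const.inner (hcont s)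
  have hφp : Function.Periodic φ 1 := by
    intro t
    simp only [hφ]
    rw [hper]
  set F : C(AddCircle (1:ℝ), ℂ) := ⟨hφp.lift, continuous_coinduced_dom.mpr hφc⟩ with hF
  have hFc : ∀ x : ℝ, F (x : AddCircle (1:ℝ)) = φ x := fun x => hφp.lift_coe x
  have hcoeff : ∀ m : ℤ, fourierCoeff (⇑F) m = ((‖sm m‖ ^ 2 : ℝ) : ℂ) := by
    intro m
    rw [fourierCoeff_eq_intervalIntegral (⇑F) m 0, zero_add]
    have hIL : ∀ v : H, (innerSL ℂ s) v = inner ℂ s v := fun v => rfl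
    have hs2 : (inner ℂ s (sm m) : ℂ) = ((‖sm m‖ ^ 2 : ℝ) : ℂ) := by
      rw [← inner_conj_symm, hinner_s m, Complex.conj_ofReal]
    rw [← hs2, hsm m, ← hIL, ← ContinuousLinearMap.intervalIntegral_comp_comm _ (hgi m)]
    rw [show (1 / (1:ℝ)) = 1 by norm_num, one_smul]
    refine intervalIntegral.integral_congr fun u _ => ?_
    rw [hFc u, fourier_coe_apply, hIL, inner_smul_right, smul_eq_mul]
    congr 2
    push_cast; ring
  have hsummable : Summable (fourierCoeff (⇑F)) := by
    rw [funext hcoeff]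
    exact Complex.summable_ofReal.mpr hbessel
  have hpt := has_pointwise_sum_fourier_series_of_summable hsummable (0 : AddCircle (1:ℝ))
  have hF0 : F (0 : AddCircle (1:ℝ)) = ((‖s‖ ^ 2 : ℝ) : ℂ) := by
    have h00 : ((0:ℝ) : AddCircle (1:ℝ)) = 0 := rfl
    rw [← h00, hFc]
    simp only [hφ]
    rw [h0, hself]
  simp only [hcoeff, fourier_eval_zero, smul_eq_mul, mul_one, hF0] at hpt
  have hparseval : HasSum (fun m : ℤ => ‖sm m‖ ^ 2) (‖s‖ ^ 2) :=
    Complex.hasSum_ofReal.mp hpt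
  have hsum : HasSum sm s := by
    have htend : Filter.Tendsto (fun F : Finset ℤ => ∑ m ∈ F, ‖sm m‖ ^ 2)
        Filter.atTop (nhds (‖s‖ ^ 2)) := hparseval
    rw [HasSum, tendsto_iff_norm_sub_tendsto_zero]
    have h2 : ∀ F : Finset ℤ, ‖(∑ m ∈ F, sm m) - s‖
        = Real.sqrt (‖s‖ ^ 2 - ∑ m ∈ F, ‖sm m‖ ^ 2) := by
      intro F
      rw [norm_sub_rev, ← Real.sqrt_sq (norm_nonneg (s - ∑ m ∈ F, sm m)), hBF F]
    simp only [h2]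
    have hT : Filter.Tendsto (fun F : Finset ℤ => ‖s‖ ^ 2 - ∑ m ∈ F, ‖sm m‖ ^ 2)
        Filter.atTop (nhds 0) := by
      have h' := Filter.Tendsto.const_sub (‖s‖ ^ 2) htend
      rw [sub_self] at h'
      exact h'
    have := hT.sqrt
    simpa using this
  exact ⟨hw, horth, hparseval, hsum⟩
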